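/- Let f = x·y·z·w·(x+y)·(y+z)·(z+w)·(w+x) ∈ S = ℂ[x,y,z,w] (the defining polynomial of the rigid Cynk–Szemberg arrangement 𝒜₁). The S-module AR(f) = {(a₁,a₂,a₃,a₄) ∈ S⁴ : a₁∂ₓf + a₂∂_yf + a₃∂_zf + a₄∂_wf = 0} is generated by four homogeneous syzygies, one of degree 2 and three of degree 3 (where a syzygy (a₁,a₂,a₃,a₄) is homogeneous of degree d if each aᵢ is homogeneous of degree d). -/

import Mathlib

open MvPolynomial

noncomputable section

/-- The polynomial ring `S = ℂ[x,y,z,w]`, with `x = X 0`, `y = X 1`, `z = X 2`, `w = X 3`. -/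
abbrev S4 : Type := MvPolynomial (Fin 4) ℂ

/-- The linear form `c₀·x + c₁·y + c₂·z + c₃·w` with coefficient vector `c`. -/
noncomputable def linForm (c : Fin 4 → ℂ) : S4 := ∑ i, C (c i) * X i

/-- A polynomial derivation `θ = a₁∂ₓ + a₂∂_y + a₃∂_z + a₄∂_w` of `S` is identified with
its coefficient tuple `a : Fin 4 → S`; the linear map `derMap f` sends `a` to `θ(f)`. -/
noncomputable def derMap (f : S4) : (Fin 4 → S4) →ₗ[S4] S4 where
  toFun a := ∑ i, a i * pderiv i f
  map_add' a b := by simp [add_mul, Finset.sum_add_distrib]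
  map_smul' c a := by simp [Finset.mul_sum, mul_assoc]

/-- The derivation module `D(𝒜)` of the central arrangement whose hyperplanes are the kernels
of the linear forms `linForm (α H)`: all derivations `θ` with `θ(α_H) ∈ S·α_H` for every `H`. -/
noncomputable def derivModule {ι : Type} (α : ι → (Fin 4 → ℂ)) :
    Submodule S4 (Fin 4 → S4) :=
  ⨅ H, Submodule.comap (derMap (linForm (α H))) (Ideal.span {linForm (α H)})

end

/-- The defining polynomial of the rigid Cynk–Szemberg arrangement 𝒜₁:
`f = xyzw(x+y)(y+z)(z+w)(w+x)`. -/
noncomputable def fQ1 : S4 :=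
  X 0 * X 1 * X 2 * X 3 * (X 0 + X 1) * (X 1 + X 2) * (X 2 + X 3) * (X 3 + X 0)

/-! ### Auxiliary machinery -/

noncomputable section AR

/-! #### Substitution (kill) maps and divisibility by variables -/

/-- The algebra map substituting `X i := 0`. -/
noncomputable def kill (i : Fin 4) : S4 →ₐ[ℂ] S4 :=
  aeval (fun j => if j = i then 0 else X j)

lemma kill_X_self (i : Fin 4) : kill i (X i) = 0 := by simp [kill]

lemma kill_X_ne {i j : Fin 4} (h : j ≠ i) : kill i (X j) = X j := by simp [kill, h]

lemma X_dvd_sub_kill (i : Fin 4) (p : S4) : X i ∣ p - kill i p := by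
  induction p using MvPolynomial.induction_on with
  | C a => simp [kill]
  | add p q hp hq => simpa [map_add, add_sub_add_comm] using dvd_add hp hq
  | mul_X p n hp =>
      by_cases hn : n = i
      · subst hn; rw [map_mul, kill_X_self, mul_zero, sub_zero]
        exact Dvd.intro p (mul_comm _ _)
      · rw [map_mul, kill_X_ne hn, ← sub_mul]; exact hp.mul_right _

/-- Syzygies of the variables `X 0, X 1, X 2` are Koszul. -/
lemma syz_var {p₁ p₂ p₃ : S4} (h : p₁ * X 0 + p₂ * X 1 + p₃ * X 2 = 0) :
    ∃ t r s : S4, p₁ = t * X 1 + r * X 2 ∧ p₂ = -t * X 0 + s * X 2 ∧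
      p₃ = -r * X 0 - s * X 1 := by
  obtain ⟨r, hr⟩ := X_dvd_sub_kill 2 p₁
  obtain ⟨s, hs⟩ := X_dvd_sub_kill 2 p₂
  have hq : kill 2 p₁ * X 0 + kill 2 p₂ * X 1 = 0 := by
    have h2 := congrArg (kill 2) h
    simpa [map_add, map_mul, kill_X_self, kill_X_ne (show (0:Fin 4) ≠ 2 by decide),
      kill_X_ne (show (1:Fin 4) ≠ 2 by decide)] using h2
  have h3 : p₃ * X 2 = (-r * X 0 - s * X 1) * X 2 := by
    linear_combination h - hq - X 0 * hr - X 1 * hs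
  have hp₃ : p₃ = -r * X 0 - s * X 1 := mul_right_cancel₀ (X_ne_zero 2) h3
  obtain ⟨t, ht⟩ := X_dvd_sub_kill 1 (kill 2 p₁)
  have hk1 : kill 1 (kill 2 p₁) * X 0 = 0 := by
    have h1 := congrArg (kill 1) hq
    simpa [map_add, map_mul, kill_X_self,
      kill_X_ne (show (0:Fin 4) ≠ 1 by decide)] using h1
  have hk10 : kill 1 (kill 2 p₁) = 0 := by
    rcases mul_eq_zero.mp hk1 with h' | h'
    · exact h'
    · exact absurd h' (X_ne_zero 0)
  rw [hk10, sub_zero] at ht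
  have hq2 : kill 2 p₂ * X 1 = (-t * X 0) * X 1 := by linear_combination hq - X 0 * ht
  have hq2' : kill 2 p₂ = -t * X 0 := mul_right_cancel₀ (X_ne_zero 1) hq2
  exact ⟨t, r, s, by linear_combination hr + ht, by linear_combination hs + hq2', hp₃⟩

/-! #### The linear forms of the arrangement and two linear automorphisms -/

noncomputable def l5 : S4 := X 0 + X 1
noncomputable def l6 : S4 := X 1 + X 2
noncomputable def l7 : S4 := X 2 + X 3
noncomputable def l8 : S4 := X 3 + X 0

noncomputable def tauF : S4 →ₐ[ℂ] S4 := aeval ![X 0 + X 1, X 1 + X 2, X 2 + X 3, X 3]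
noncomputable def tauB : S4 →ₐ[ℂ] S4 :=
  aeval ![X 0 - X 1 + X 2 - X 3, X 1 - X 2 + X 3, X 2 - X 3, X 3]

/-- The linear change of coordinates `x ↦ x+y, y ↦ y+z, z ↦ z+w, w ↦ w`. -/
noncomputable def tau : S4 ≃ₐ[ℂ] S4 :=
  AlgEquiv.ofAlgHom tauF tauB
    (by apply MvPolynomial.algHom_ext; intro i; fin_cases i <;>
          (simp [tauF, tauB]; try ring))
    (by apply MvPolynomial.algHom_ext; intro i; fin_cases i <;>
          (simp [tauF, tauB]; try ring))

lemma tau_X0 : tau (X 0) = l5 := by simp [tau, tauF, l5]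
lemma tau_X1 : tau (X 1) = l6 := by simp [tau, tauF, l6]
lemma tau_X2 : tau (X 2) = l7 := by simp [tau, tauF, l7]

noncomputable def e8F : S4 →ₐ[ℂ] S4 := aeval ![X 0, X 1, X 2, X 3 + X 0]
noncomputable def e8B : S4 →ₐ[ℂ] S4 := aeval ![X 0, X 1, X 2, X 3 - X 0]

/-- The linear change of coordinates `w ↦ w + x`. -/
noncomputable def e8 : S4 ≃ₐ[ℂ] S4 :=
  AlgEquiv.ofAlgHom e8F e8B
    (by apply MvPolynomial.algHom_ext; intro i; fin_cases i <;>
          (simp [e8F, e8B]; try ring))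
    (by apply MvPolynomial.algHom_ext; intro i; fin_cases i <;>
          (simp [e8F, e8B]; try ring))

lemma e8_X3 : e8 (X 3) = l8 := by simp [e8, e8F, l8]

/-! #### Primality of the linear forms -/

lemma prime_Xi (i : Fin 4) : Prime (X i : S4) := by
  have h0 : Prime (X 0 : S4) := by
    rw [← MulEquiv.prime_iff (finSuccEquiv ℂ 3).toMulEquiv]
    simp [finSuccEquiv_apply]
    exact Polynomial.prime_X
  have := (MulEquiv.prime_iff (renameEquiv ℂ (Equiv.swap (0 : Fin 4) i)).toMulEquiv (p := (X 0 : S4))).symm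
  rw [this] at h0
  simpa using h0

lemma prime_of_algEquiv (e : S4 ≃ₐ[ℂ] S4) {p : S4} (hp : Prime p) : Prime (e p) := by
  have := (MulEquiv.prime_iff e.toMulEquiv (p := p)).symm.mp hp
  simpa using this

lemma prime_l5 : Prime l5 := tau_X0 ▸ prime_of_algEquiv tau (prime_Xi 0)
lemma prime_l6 : Prime l6 := tau_X1 ▸ prime_of_algEquiv tau (prime_Xi 1)
lemma prime_l7 : Prime l7 := tau_X2 ▸ prime_of_algEquiv tau (prime_Xi 2)
lemma prime_l8 : Prime l8 := e8_X3 ▸ prime_of_algEquiv e8 (prime_Xi 3)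

/-! #### Syzygies of the four dependent linear forms -/

/-- Syzygies of `ℓ₅, ℓ₆, ℓ₇` are Koszul. -/
lemma syz_l {p₁ p₂ p₃ : S4} (h : p₁ * l5 + p₂ * l6 + p₃ * l7 = 0) :
    ∃ t r s : S4, p₁ = t * l6 + r * l7 ∧ p₂ = -t * l5 + s * l7 ∧
      p₃ = -r * l5 - s * l6 := by
  have h5 : tau.symm l5 = X 0 := by rw [← tau_X0]; exact tau.symm_apply_apply _
  have h6 : tau.symm l6 = X 1 := by rw [← tau_X1]; exact tau.symm_apply_apply _
  have h7 : tau.symm l7 = X 2 := by rw [← tau_X2]; exact tau.symm_apply_apply _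
  have h' : tau.symm p₁ * X 0 + tau.symm p₂ * X 1 + tau.symm p₃ * X 2 = 0 := by
    have := congrArg tau.symm h
    simpa [map_add, map_mul, h5, h6, h7] using this
  obtain ⟨t, r, s, e1, e2, e3⟩ := syz_var h'
  refine ⟨tau t, tau r, tau s, ?_, ?_, ?_⟩
  · have := congrArg tau e1
    simpa [map_add, map_mul, map_neg, tau_X1, tau_X2, tau.apply_symm_apply] using this
  · have := congrArg tau e2
    simpa [map_add, map_mul, map_neg, tau_X0, tau_X2, tau.apply_symm_apply] using this
  · have := congrArg tau e3
    simpa [map_sub, map_mul, map_neg, tau_X0, tau_X1, tau.apply_symm_apply] using this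

/-- Syzygies of `ℓ₅, ℓ₆, ℓ₇, ℓ₈`. -/
lemma syz4 {u1 u2 u3 u4 : S4}
    (h : l5 * u1 + l6 * u2 + l7 * u3 + l8 * u4 = 0) :
    ∃ t r s : S4, u1 = t * l6 + r * l7 - u4 ∧ u2 = -t * l5 + s * l7 + u4 ∧
      u3 = -r * l5 - s * l6 - u4 := by
  have rel : l5 - l6 + l7 - l8 = 0 := by simp only [l5, l6, l7, l8]; ring
  have h' : (u1 + u4) * l5 + (u2 - u4) * l6 + (u3 + u4) * l7 = 0 := by
    linear_combination h + u4 * rel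
  obtain ⟨t, r, s, e1, e2, e3⟩ := syz_l h'
  exact ⟨t, r, s, by linear_combination e1, by linear_combination e2, by linear_combination e3⟩

/-! #### The map `Ψ` from syzygies of the linear forms to `AR(f)` -/

/-- The `S`-linear map `Ψ` sending a syzygy `u` of `(ℓ₅,ℓ₆,ℓ₇,ℓ₈)` to an element of `AR(f)`. -/
noncomputable def Psi : (Fin 4 → S4) →ₗ[S4] (Fin 4 → S4) where
  toFun u :=
    ![X 0 * (C 6 * (l5 * u 0) + C 4 * (l6 * u 1) + C 2 * (l7 * u 2)
        + X 1 * u 0 + X 2 * u 1 + X 3 * u 2 + X 0 * u 3),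
      X 1 * (C 6 * (l5 * u 0) + C 4 * (l6 * u 1) + C 2 * (l7 * u 2)
        + X 1 * u 0 + X 2 * u 1 + X 3 * u 2 + X 0 * u 3 - C 8 * (l5 * u 0)),
      X 2 * (C 6 * (l5 * u 0) + C 4 * (l6 * u 1) + C 2 * (l7 * u 2)
        + X 1 * u 0 + X 2 * u 1 + X 3 * u 2 + X 0 * u 3 - C 8 * (l5 * u 0) - C 8 * (l6 * u 1)),
      X 3 * (C 6 * (l5 * u 0) + C 4 * (l6 * u 1) + C 2 * (l7 * u 2)
        + X 1 * u 0 + X 2 * u 1 + X 3 * u 2 + X 0 * u 3 - C 8 * (l5 * u 0) - C 8 * (l6 * u 1)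
        - C 8 * (l7 * u 2))]
  map_add' a b := by
    funext i
    fin_cases i <;> (simp; ring)
  map_smul' c a := by
    funext i
    fin_cases i <;> (simp [smul_eq_mul]; ring)

set_option maxHeartbeats 4000000 in
/-- The fundamental identity: `θ_{Ψu}(f) = 8x·(f/(w+x))·(ℓ₅u₁+ℓ₆u₂+ℓ₇u₃+ℓ₈u₄)`. -/
lemma claimA8 (u : Fin 4 → S4) :
    derMap fQ1 (Psi u) =
      C 8 * X 0 * (X 0 * X 1 * X 2 * X 3 * l5 * l6 * l7) *
        (l5 * u 0 + l6 * u 1 + l7 * u 2 + l8 * u 3) := by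
  simp only [derMap, Psi, LinearMap.coe_mk, AddHom.coe_mk, Fin.sum_univ_four, fQ1,
    l5, l6, l7, l8, Matrix.cons_val_zero, Matrix.cons_val_one, Matrix.head_cons,
    Matrix.cons_val_two, Matrix.tail_cons, Matrix.cons_val_three,
    map_add, pderiv_mul, pderiv_X_self, pderiv_X_of_ne (show (1:Fin 4) ≠ 0 by decide),
    pderiv_X_of_ne (show (2:Fin 4) ≠ 0 by decide), pderiv_X_of_ne (show (3:Fin 4) ≠ 0 by decide),
    pderiv_X_of_ne (show (0:Fin 4) ≠ 1 by decide), pderiv_X_of_ne (show (2:Fin 4) ≠ 1 by decide),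
    pderiv_X_of_ne (show (3:Fin 4) ≠ 1 by decide), pderiv_X_of_ne (show (0:Fin 4) ≠ 2 by decide),
    pderiv_X_of_ne (show (1:Fin 4) ≠ 2 by decide), pderiv_X_of_ne (show (3:Fin 4) ≠ 2 by decide),
    pderiv_X_of_ne (show (0:Fin 4) ≠ 3 by decide), pderiv_X_of_ne (show (1:Fin 4) ≠ 3 by decide),
    pderiv_X_of_ne (show (2:Fin 4) ≠ 3 by decide)]
  simp only [map_ofNat]
  ring

set_option maxHeartbeats 1000000 in
/-- The Euler identity. -/
lemma euler (d : S4) : derMap fQ1 (fun i => d * X i) = d * (8 * fQ1) := by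
  simp only [derMap, LinearMap.coe_mk, AddHom.coe_mk, Fin.sum_univ_four, fQ1,
    map_add, pderiv_mul, pderiv_X_self, pderiv_X_of_ne (show (1:Fin 4) ≠ 0 by decide),
    pderiv_X_of_ne (show (2:Fin 4) ≠ 0 by decide), pderiv_X_of_ne (show (3:Fin 4) ≠ 0 by decide),
    pderiv_X_of_ne (show (0:Fin 4) ≠ 1 by decide), pderiv_X_of_ne (show (2:Fin 4) ≠ 1 by decide),
    pderiv_X_of_ne (show (3:Fin 4) ≠ 1 by decide), pderiv_X_of_ne (show (0:Fin 4) ≠ 2 by decide),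
    pderiv_X_of_ne (show (1:Fin 4) ≠ 2 by decide), pderiv_X_of_ne (show (3:Fin 4) ≠ 2 by decide),
    pderiv_X_of_ne (show (0:Fin 4) ≠ 3 by decide), pderiv_X_of_ne (show (1:Fin 4) ≠ 3 by decide),
    pderiv_X_of_ne (show (2:Fin 4) ≠ 3 by decide)]
  ring

/-! #### The product-rule splitting of `θ(f)` along a factor of `f` -/

lemma derMap_factor (l h : S4) (hf : fQ1 = l * h) (a : Fin 4 → S4) :
    derMap fQ1 a = derMap l a * h + l * derMap h a := by
  simp only [derMap, LinearMap.coe_mk, AddHom.coe_mk, Fin.sum_univ_four, hf, pderiv_mul]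
  ring

lemma derMap_X (i : Fin 4) (a : Fin 4 → S4) : derMap (X i) a = a i := by
  fin_cases i <;>
    simp [derMap, Fin.sum_univ_four, pderiv_X_self,
      pderiv_X_of_ne (show (1:Fin 4) ≠ 0 by decide),
      pderiv_X_of_ne (show (2:Fin 4) ≠ 0 by decide),
      pderiv_X_of_ne (show (3:Fin 4) ≠ 0 by decide),
      pderiv_X_of_ne (show (0:Fin 4) ≠ 1 by decide),
      pderiv_X_of_ne (show (2:Fin 4) ≠ 1 by decide),
      pderiv_X_of_ne (show (3:Fin 4) ≠ 1 by decide),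
      pderiv_X_of_ne (show (0:Fin 4) ≠ 2 by decide),
      pderiv_X_of_ne (show (1:Fin 4) ≠ 2 by decide),
      pderiv_X_of_ne (show (3:Fin 4) ≠ 2 by decide),
      pderiv_X_of_ne (show (0:Fin 4) ≠ 3 by decide),
      pderiv_X_of_ne (show (1:Fin 4) ≠ 3 by decide),
      pderiv_X_of_ne (show (2:Fin 4) ≠ 3 by decide)]

lemma derMap_add (p q : S4) (a : Fin 4 → S4) :
    derMap (p + q) a = derMap p a + derMap q a := by
  simp only [derMap, LinearMap.coe_mk, AddHom.coe_mk, Fin.sum_univ_four, map_add]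
  ring

/-- If `p` vanishes at a point where `q` does not, then `p ∤ q`. -/
lemma not_dvd_of_eval {p q : S4} (v : Fin 4 → ℂ)
    (hp : eval v p = 0) (hq : eval v q ≠ 0) : ¬ p ∣ q := by
  rintro ⟨m, rfl⟩
  exact hq (by rw [eval_mul, hp, zero_mul])

lemma fQ1_ne_zero : fQ1 ≠ 0 := by
  intro h
  have := congrArg (eval ![(1:ℂ), 1, 1, 1]) h
  simp [fQ1] at this


/-! #### Homogeneity helpers -/

lemma mul1H {p q : S4} {d : ℕ} (hp : p.IsHomogeneous 1) (hq : q.IsHomogeneous d) :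
    (p * q).IsHomogeneous (d + 1) := by
  have := hp.mul hq; rwa [Nat.add_comm] at this

lemma CmulH {c : ℂ} {p : S4} {d : ℕ} (hp : p.IsHomogeneous d) :
    (C c * p).IsHomogeneous d := by
  simpa using (isHomogeneous_C _ c).mul hp

lemma subH {p q : S4} {d : ℕ} (hp : p.IsHomogeneous d) (hq : q.IsHomogeneous d) :
    (p - q).IsHomogeneous d := by
  simpa [sub_eq_add_neg] using hp.add hq.neg

lemma hl5 : l5.IsHomogeneous 1 := (isHomogeneous_X _ _).add (isHomogeneous_X _ _)
lemma hl6 : l6.IsHomogeneous 1 := (isHomogeneous_X _ _).add (isHomogeneous_X _ _)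
lemma hl7 : l7.IsHomogeneous 1 := (isHomogeneous_X _ _).add (isHomogeneous_X _ _)

lemma Psi_isHom {u : Fin 4 → S4} {d : ℕ} (hu : ∀ i, (u i).IsHomogeneous d) :
    ∀ i, (Psi u i).IsHomogeneous (d + 2) := by
  have h1 : (C 6 * (l5 * u 0) + C 4 * (l6 * u 1) + C 2 * (l7 * u 2)
      + X 1 * u 0 + X 2 * u 1 + X 3 * u 2 + X 0 * u 3).IsHomogeneous (d + 1) :=
    ((((((CmulH (mul1H hl5 (hu 0))).add (CmulH (mul1H hl6 (hu 1)))).add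
      (CmulH (mul1H hl7 (hu 2)))).add (mul1H (isHomogeneous_X _ _) (hu 0))).add
      (mul1H (isHomogeneous_X _ _) (hu 1))).add
      (mul1H (isHomogeneous_X _ _) (hu 2))).add (mul1H (isHomogeneous_X _ _) (hu 3))
  have h2 := subH h1 (CmulH (c := 8) (mul1H hl5 (hu 0)))
  have h3 := subH h2 (CmulH (c := 8) (mul1H hl6 (hu 1)))
  have h4 := subH h3 (CmulH (c := 8) (mul1H hl7 (hu 2)))
  intro i
  fin_cases i
  · exact mul1H (isHomogeneous_X _ _) h1
  · exact mul1H (isHomogeneous_X _ _) h2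
  · exact mul1H (isHomogeneous_X _ _) h3
  · exact mul1H (isHomogeneous_X _ _) h4

/-! #### The four generating syzygies of the linear forms, and the generators of `AR(f)` -/

noncomputable def k0v : Fin 4 → S4 := ![-1, 1, -1, 1]
noncomputable def k1v : Fin 4 → S4 := ![l6, -l5, 0, 0]
noncomputable def k2v : Fin 4 → S4 := ![l7, 0, -l5, 0]
noncomputable def k3v : Fin 4 → S4 := ![0, l7, -l6, 0]

noncomputable def gvec : Fin 4 → (Fin 4 → S4) := ![Psi k0v, Psi k1v, Psi k2v, Psi k3v]

lemma hk0 : ∀ i, (k0v i).IsHomogeneous 0 := by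
  intro i; fin_cases i
  exacts [(isHomogeneous_one _ _).neg, isHomogeneous_one _ _,
    (isHomogeneous_one _ _).neg, isHomogeneous_one _ _]

lemma hk1 : ∀ i, (k1v i).IsHomogeneous 1 := by
  intro i; fin_cases i
  exacts [hl6, hl5.neg, isHomogeneous_zero _ _ _, isHomogeneous_zero _ _ _]

lemma hk2 : ∀ i, (k2v i).IsHomogeneous 1 := by
  intro i; fin_cases i
  exacts [hl7, isHomogeneous_zero _ _ _, hl5.neg, isHomogeneous_zero _ _ _]

lemma hk3 : ∀ i, (k3v i).IsHomogeneous 1 := by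
  intro i; fin_cases i
  exacts [isHomogeneous_zero _ _ _, hl7, hl6.neg, isHomogeneous_zero _ _ _]

/-! #### The cofactors of the eight hyperplanes and the divisibility facts -/

noncomputable def hh1 : S4 := X 1 * X 2 * X 3 * l5 * l6 * l7 * l8
noncomputable def hh2 : S4 := X 0 * X 2 * X 3 * l5 * l6 * l7 * l8
noncomputable def hh3 : S4 := X 0 * X 1 * X 3 * l5 * l6 * l7 * l8
noncomputable def hh4 : S4 := X 0 * X 1 * X 2 * l5 * l6 * l7 * l8
noncomputable def hh5 : S4 := X 0 * X 1 * X 2 * X 3 * l6 * l7 * l8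
noncomputable def hh6 : S4 := X 0 * X 1 * X 2 * X 3 * l5 * l7 * l8
noncomputable def hh7 : S4 := X 0 * X 1 * X 2 * X 3 * l5 * l6 * l8
noncomputable def hh8 : S4 := X 0 * X 1 * X 2 * X 3 * l5 * l6 * l7

lemma hf1 : fQ1 = X 0 * hh1 := by simp only [fQ1, hh1, l5, l6, l7, l8]; ring
lemma hf2 : fQ1 = X 1 * hh2 := by simp only [fQ1, hh2, l5, l6, l7, l8]; ring
lemma hf3 : fQ1 = X 2 * hh3 := by simp only [fQ1, hh3, l5, l6, l7, l8]; ring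
lemma hf4 : fQ1 = X 3 * hh4 := by simp only [fQ1, hh4, l5, l6, l7, l8]; ring
lemma hf5 : fQ1 = l5 * hh5 := by simp only [fQ1, hh5, l5, l6, l7, l8]; ring
lemma hf6 : fQ1 = l6 * hh6 := by simp only [fQ1, hh6, l5, l6, l7, l8]; ring
lemma hf7 : fQ1 = l7 * hh7 := by simp only [fQ1, hh7, l5, l6, l7, l8]; ring
lemma hf8 : fQ1 = l8 * hh8 := by simp only [fQ1, hh8, l5, l6, l7, l8]; ring

lemma nd1 : ¬ (X 0 : S4) ∣ hh1 := by
  apply not_dvd_of_eval ![0, 1, 1, 1] <;> simp [hh1, l5, l6, l7, l8] <;> norm_num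
lemma nd2 : ¬ (X 1 : S4) ∣ hh2 := by
  apply not_dvd_of_eval ![1, 0, 1, 1] <;> simp [hh2, l5, l6, l7, l8] <;> norm_num
lemma nd3 : ¬ (X 2 : S4) ∣ hh3 := by
  apply not_dvd_of_eval ![1, 1, 0, 1] <;> simp [hh3, l5, l6, l7, l8] <;> norm_num
lemma nd4 : ¬ (X 3 : S4) ∣ hh4 := by
  apply not_dvd_of_eval ![1, 1, 1, 0] <;> simp [hh4, l5, l6, l7, l8] <;> norm_num
lemma nd5 : ¬ l5 ∣ hh5 := by
  apply not_dvd_of_eval ![2, -2, 1, 3] <;> simp [hh5, l5, l6, l7, l8] <;> norm_num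
lemma nd6 : ¬ l6 ∣ hh6 := by
  apply not_dvd_of_eval ![1, 2, -2, 3] <;> simp [hh6, l5, l6, l7, l8] <;> norm_num
lemma nd7 : ¬ l7 ∣ hh7 := by
  apply not_dvd_of_eval ![3, 1, 2, -2] <;> simp [hh7, l5, l6, l7, l8] <;> norm_num
lemma nd8 : ¬ l8 ∣ hh8 := by
  apply not_dvd_of_eval ![2, 1, 3, -2] <;> simp [hh8, l5, l6, l7, l8] <;> norm_num

lemma ndX5 : ¬ l5 ∣ (X 0 : S4) := by
  apply not_dvd_of_eval ![1, -1, 0, 0] <;> simp [l5] <;> norm_num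
lemma ndX6 : ¬ l6 ∣ (X 1 : S4) := by
  apply not_dvd_of_eval ![0, 1, -1, 0] <;> simp [l6] <;> norm_num
lemma ndX7 : ¬ l7 ∣ (X 2 : S4) := by
  apply not_dvd_of_eval ![0, 0, 1, -1] <;> simp [l7] <;> norm_num
lemma ndX8 : ¬ l8 ∣ (X 3 : S4) := by
  apply not_dvd_of_eval ![-1, 0, 0, 1] <;> simp [l8] <;> norm_num

/-- First-stage divisibility: from `θ(f) = 0` and `f = ℓ·h` with `ℓ` prime not dividing `h`,
the coefficient `θ(ℓ)` is divisible by `ℓ`. -/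
lemma divStep {l h c : S4} (hprime : Prime l) (hf : fQ1 = l * h) (hnd : ¬ l ∣ h)
    {a : Fin 4 → S4} (ha : derMap fQ1 a = 0) (hc : derMap l a = c) : l ∣ c := by
  have hs := derMap_factor l h hf a
  rw [ha, hc] at hs
  have hd : l ∣ c * h := ⟨-(derMap h a), by linear_combination -hs⟩
  exact (hprime.2.2 _ _ hd).resolve_right hnd

lemma derMap_l5 (a : Fin 4 → S4) : derMap l5 a = a 0 + a 1 := by
  simp only [l5, derMap_add, derMap_X]
lemma derMap_l6 (a : Fin 4 → S4) : derMap l6 a = a 1 + a 2 := by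
  simp only [l6, derMap_add, derMap_X]
lemma derMap_l7 (a : Fin 4 → S4) : derMap l7 a = a 2 + a 3 := by
  simp only [l7, derMap_add, derMap_X]
lemma derMap_l8 (a : Fin 4 → S4) : derMap l8 a = a 3 + a 0 := by
  simp only [l8, derMap_add, derMap_X]

end AR

set_option maxHeartbeats 3000000 in
/-- The module `AR(f) = {(a₁,a₂,a₃,a₄) : a₁∂ₓf + a₂∂_yf + a₃∂_zf + a₄∂_wf = 0}`
for `f = xyzw(x+y)(y+z)(z+w)(w+x)` is generated by four homogeneous syzygies, one of degree `2`
and three of degree `3`. -/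
theorem AR_Q1_generators :
    ∃ g : Fin 4 → (Fin 4 → S4),
      Submodule.span S4 (Set.range g) = LinearMap.ker (derMap fQ1) ∧
      ∀ j : Fin 4, ∀ i : Fin 4, (g j i).IsHomogeneous (![2,3,3,3] j) := by
  classical
  refine ⟨gvec, le_antisymm ?_ ?_, ?_⟩
  · -- the four syzygies lie in `AR(f)`
    rw [Submodule.span_le]
    rintro x ⟨j, rfl⟩
    simp only [SetLike.mem_coe, LinearMap.mem_ker]
    fin_cases j
    · show derMap fQ1 (Psi k0v) = 0
      rw [claimA8]
      have hz : l5 * k0v 0 + l6 * k0v 1 + l7 * k0v 2 + l8 * k0v 3 = 0 := by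
        simp only [k0v, Matrix.cons_val_zero, Matrix.cons_val_one, Matrix.head_cons, Matrix.cons_val_two, Matrix.tail_cons, Matrix.cons_val_three, l5, l6, l7, l8]; ring
      rw [hz, mul_zero]
    · show derMap fQ1 (Psi k1v) = 0
      rw [claimA8]
      have hz : l5 * k1v 0 + l6 * k1v 1 + l7 * k1v 2 + l8 * k1v 3 = 0 := by
        simp only [k1v, Matrix.cons_val_zero, Matrix.cons_val_one, Matrix.head_cons, Matrix.cons_val_two, Matrix.tail_cons, Matrix.cons_val_three, l5, l6, l7, l8]; ring
      rw [hz, mul_zero]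
    · show derMap fQ1 (Psi k2v) = 0
      rw [claimA8]
      have hz : l5 * k2v 0 + l6 * k2v 1 + l7 * k2v 2 + l8 * k2v 3 = 0 := by
        simp only [k2v, Matrix.cons_val_zero, Matrix.cons_val_one, Matrix.head_cons, Matrix.cons_val_two, Matrix.tail_cons, Matrix.cons_val_three, l5, l6, l7, l8]; ring
      rw [hz, mul_zero]
    · show derMap fQ1 (Psi k3v) = 0
      rw [claimA8]
      have hz : l5 * k3v 0 + l6 * k3v 1 + l7 * k3v 2 + l8 * k3v 3 = 0 := by
        simp only [k3v, Matrix.cons_val_zero, Matrix.cons_val_one, Matrix.head_cons, Matrix.cons_val_two, Matrix.tail_cons, Matrix.cons_val_three, l5, l6, l7, l8]; ring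
      rw [hz, mul_zero]
  · -- every element of `AR(f)` is a combination of the four syzygies
    intro a haker
    have ha : derMap fQ1 a = 0 := LinearMap.mem_ker.mp haker
    obtain ⟨c1, hc1⟩ := divStep (prime_Xi 0) hf1 nd1 ha (derMap_X 0 a)
    obtain ⟨c2, hc2⟩ := divStep (prime_Xi 1) hf2 nd2 ha (derMap_X 1 a)
    obtain ⟨c3, hc3⟩ := divStep (prime_Xi 2) hf3 nd3 ha (derMap_X 2 a)
    obtain ⟨c4, hc4⟩ := divStep (prime_Xi 3) hf4 nd4 ha (derMap_X 3 a)
    obtain ⟨m5, hm5⟩ := divStep prime_l5 hf5 nd5 ha (derMap_l5 a)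
    obtain ⟨m6, hm6⟩ := divStep prime_l6 hf6 nd6 ha (derMap_l6 a)
    obtain ⟨m7, hm7⟩ := divStep prime_l7 hf7 nd7 ha (derMap_l7 a)
    obtain ⟨m8, hm8⟩ := divStep prime_l8 hf8 nd8 ha (derMap_l8 a)
    have rel5 : l5 = X 0 + X 1 := rfl
    have rel6 : l6 = X 1 + X 2 := rfl
    have rel7 : l7 = X 2 + X 3 := rfl
    have rel8 : l8 = X 3 + X 0 := rfl
    obtain ⟨u1, hu1⟩ : l5 ∣ c1 - c2 :=
      (prime_l5.2.2 (X 0) (c1 - c2)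
        ⟨m5 - c2, by linear_combination hm5 - hc1 - hc2 + c2 * rel5⟩).resolve_left ndX5
    obtain ⟨u2, hu2⟩ : l6 ∣ c2 - c3 :=
      (prime_l6.2.2 (X 1) (c2 - c3)
        ⟨m6 - c3, by linear_combination hm6 - hc2 - hc3 + c3 * rel6⟩).resolve_left ndX6
    obtain ⟨u3, hu3⟩ : l7 ∣ c3 - c4 :=
      (prime_l7.2.2 (X 2) (c3 - c4)
        ⟨m7 - c4, by linear_combination hm7 - hc3 - hc4 + c4 * rel7⟩).resolve_left ndX7
    obtain ⟨u4, hu4⟩ : l8 ∣ c4 - c1 :=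
      (prime_l8.2.2 (X 3) (c4 - c1)
        ⟨m8 - c1, by linear_combination hm8 - hc4 - hc1 + c1 * rel8⟩).resolve_left ndX8
    have hLu : l5 * u1 + l6 * u2 + l7 * u3 + l8 * u4 = 0 := by
      linear_combination -hu1 - hu2 - hu3 - hu4
    have hPsi0 : derMap fQ1 (Psi ![u1, u2, u3, u4]) = 0 := by
      rw [claimA8]
      have hz : l5 * (![u1,u2,u3,u4] : Fin 4 → S4) 0 + l6 * (![u1,u2,u3,u4] : Fin 4 → S4) 1 +
          l7 * (![u1,u2,u3,u4] : Fin 4 → S4) 2 + l8 * (![u1,u2,u3,u4] : Fin 4 → S4) 3 = 0 := by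
        simpa using hLu
      rw [hz, mul_zero]
    have hk : ∀ i, C 8 * a i - Psi ![u1,u2,u3,u4] i = (C 8 * c1 - (C 6 * (l5 * u1) + C 4 * (l6 * u2) + C 2 * (l7 * u3) + X 1 * u1 + X 2 * u2 + X 3 * u3 + X 0 * u4)) * X i := by
      intro i
      fin_cases i
      · show C 8 * a 0 - Psi ![u1,u2,u3,u4] 0 = (C 8 * c1 - (C 6 * (l5 * u1) + C 4 * (l6 * u2) + C 2 * (l7 * u3) + X 1 * u1 + X 2 * u2 + X 3 * u3 + X 0 * u4)) * X 0
        simp only [Psi, LinearMap.coe_mk, AddHom.coe_mk, Matrix.cons_val_zero, Matrix.cons_val_one, Matrix.head_cons, Matrix.cons_val_two, Matrix.tail_cons, Matrix.cons_val_three]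
        linear_combination C 8 * hc1
      · show C 8 * a 1 - Psi ![u1,u2,u3,u4] 1 = (C 8 * c1 - (C 6 * (l5 * u1) + C 4 * (l6 * u2) + C 2 * (l7 * u3) + X 1 * u1 + X 2 * u2 + X 3 * u3 + X 0 * u4)) * X 1
        simp only [Psi, LinearMap.coe_mk, AddHom.coe_mk, Matrix.cons_val_zero, Matrix.cons_val_one, Matrix.head_cons, Matrix.cons_val_two, Matrix.tail_cons, Matrix.cons_val_three]
        linear_combination C 8 * hc2 - C 8 * X 1 * hu1
      · show C 8 * a 2 - Psi ![u1,u2,u3,u4] 2 = (C 8 * c1 - (C 6 * (l5 * u1) + C 4 * (l6 * u2) + C 2 * (l7 * u3) + X 1 * u1 + X 2 * u2 + X 3 * u3 + X 0 * u4)) * X 2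
        simp only [Psi, LinearMap.coe_mk, AddHom.coe_mk, Matrix.cons_val_zero, Matrix.cons_val_one, Matrix.head_cons, Matrix.cons_val_two, Matrix.tail_cons, Matrix.cons_val_three]
        linear_combination C 8 * hc3 - C 8 * X 2 * hu1 - C 8 * X 2 * hu2
      · show C 8 * a 3 - Psi ![u1,u2,u3,u4] 3 = (C 8 * c1 - (C 6 * (l5 * u1) + C 4 * (l6 * u2) + C 2 * (l7 * u3) + X 1 * u1 + X 2 * u2 + X 3 * u3 + X 0 * u4)) * X 3
        simp only [Psi, LinearMap.coe_mk, AddHom.coe_mk, Matrix.cons_val_zero, Matrix.cons_val_one, Matrix.head_cons, Matrix.cons_val_two, Matrix.tail_cons, Matrix.cons_val_three]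
        linear_combination C 8 * hc4 - C 8 * X 3 * hu1 - C 8 * X 3 * hu2 - C 8 * X 3 * hu3
    have hDeq : (C 8 : S4) • a - Psi ![u1,u2,u3,u4] = (fun i => (C 8 * c1 - (C 6 * (l5 * u1) + C 4 * (l6 * u2) + C 2 * (l7 * u3) + X 1 * u1 + X 2 * u2 + X 3 * u3 + X 0 * u4)) * X i) := by
      funext i
      simpa [Pi.sub_apply, Pi.smul_apply, smul_eq_mul] using hk i
    have h80 : (C 8 * c1 - (C 6 * (l5 * u1) + C 4 * (l6 * u2) + C 2 * (l7 * u3) + X 1 * u1 + X 2 * u2 + X 3 * u3 + X 0 * u4)) * (8 * fQ1) = 0 := by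
      rw [← euler, ← hDeq, map_sub, LinearMap.map_smul, ha, hPsi0, smul_zero, sub_zero]
    have hDD0 : (C 8 * c1 - (C 6 * (l5 * u1) + C 4 * (l6 * u2) + C 2 * (l7 * u3) + X 1 * u1 + X 2 * u2 + X 3 * u3 + X 0 * u4)) = 0 := by
      rcases mul_eq_zero.mp h80 with h | h
      · exact h
      · exact absurd h (mul_ne_zero (by norm_num) fQ1_ne_zero)
    have hPsiEq : Psi ![u1,u2,u3,u4] = (C 8 : S4) • a := by
      have hz : (C 8 : S4) • a - Psi ![u1,u2,u3,u4] = 0 := by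
        rw [hDeq]; funext i; simp [hDD0]
      exact (sub_eq_zero.mp hz).symm
    obtain ⟨t, r, s, e1, e2, e3⟩ := syz4 hLu
    have hudec : (![u1,u2,u3,u4] : Fin 4 → S4)
        = t • k1v + r • k2v + s • k3v + u4 • k0v := by
      funext i
      fin_cases i
      · simp [k0v, k1v, k2v, k3v, smul_eq_mul]
        linear_combination e1
      · simp [k0v, k1v, k2v, k3v, smul_eq_mul]
        linear_combination e2
      · simp [k0v, k1v, k2v, k3v, smul_eq_mul]
        linear_combination e3
      · simp [k0v, k1v, k2v, k3v]
    have hcomb : Psi ![u1,u2,u3,u4]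
        = t • Psi k1v + r • Psi k2v + s • Psi k3v + u4 • Psi k0v := by
      rw [hudec, map_add, map_add, map_add, map_smul, map_smul, map_smul, map_smul]
    have h8inv : (8 : ℂ)⁻¹ * 8 = 1 := by norm_num
    have haeq : a = (C ((8 : ℂ)⁻¹) : S4) • Psi ![u1,u2,u3,u4] := by
      rw [hPsiEq, smul_smul, ← C_mul, h8inv, C_1, one_smul]
    have mem : ∀ j : Fin 4, gvec j ∈ Submodule.span S4 (Set.range gvec) :=
      fun j => Submodule.subset_span ⟨j, rfl⟩
    rw [haeq, hcomb]
    refine Submodule.smul_mem _ _ (add_mem (add_mem (add_mem ?_ ?_) ?_) ?_)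
    · exact Submodule.smul_mem _ _ (mem 1)
    · exact Submodule.smul_mem _ _ (mem 2)
    · exact Submodule.smul_mem _ _ (mem 3)
    · exact Submodule.smul_mem _ _ (mem 0)
  · -- homogeneity of the generators
    intro j i
    fin_cases j
    · exact Psi_isHom hk0 i
    · exact Psi_isHom hk1 i
    · exact Psi_isHom hk2 i
    · exact Psi_isHom hk3 i
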